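/- Let f₁ : [0,1] → ℝ be twice continuously differentiable, and set Σ' = {σ ∈ ℂ : Re σ > −1, σ ≠ 0, ∫₀¹ t^σ f₃(t) dt = 1}. If Σ' is nonempty, then it contains an element σ₁ of maximal real part, i.e., there exists σ₁ ∈ Σ' with Re σ ≤ Re σ₁ for all σ ∈ Σ'. -/

import Mathlib

open MeasureTheory Set Filter Complex intervalIntegral Topology

noncomputable section Stmt14Aux

variable (f₁ : ℝ → ℝ)

/-- The primitive `∫_0^t x f₁(x) dx`. -/
def S14g (t : ℝ) : ℝ := ∫ x in (0:ℝ)..t, x * f₁ x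

/-- The function `f₃`. -/
def S14f3 (t : ℝ) : ℝ := f₁ t - (1 / t ^ 2) * S14g f₁ t

/-- `f₃`, coerced to `ℂ` and cut off outside `(0,1]`. -/
def S14ff (t : ℝ) : ℂ := Set.indicator (Set.Ioc 0 1) (fun t => (S14f3 f₁ t : ℂ)) t

/-- The Mellin-type transform `F(σ) = ∫_0^1 t^σ f₃(t) dt`. -/
def S14F (σ : ℂ) : ℂ := ∫ t in (0:ℝ)..1, (t : ℂ) ^ σ * (S14f3 f₁ t : ℂ)

theorem S14g_cont (hc : ContinuousOn f₁ (Icc 0 1)) :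
    ContinuousOn (S14g f₁) (Icc 0 1) := by
  have : IntegrableOn (fun x => x * f₁ x) (uIcc (0:ℝ) 1) := by
    rw [uIcc_of_le zero_le_one]
    exact (continuousOn_id.mul hc).integrableOn_Icc
  have h2 := intervalIntegral.continuousOn_primitive_interval this
  rw [uIcc_of_le (zero_le_one : (0:ℝ) ≤ 1)] at h2
  exact h2

theorem S14g_bound (hc : ContinuousOn f₁ (Icc 0 1)) {C : ℝ}
    (hC : ∀ t ∈ Icc (0:ℝ) 1, |f₁ t| ≤ C) :
    ∀ t ∈ Ioc (0:ℝ) 1, |S14g f₁ t| ≤ C * t ^ 2 := by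
  intro t ht
  have h := intervalIntegral.norm_integral_le_of_norm_le_const
    (C := C * t) (f := fun x => x * f₁ x) (a := 0) (b := t) ?_
  · calc |S14g f₁ t| ≤ C * t * |t - 0| := h
      _ = C * t ^ 2 := by
        rw [sub_zero, abs_of_pos ht.1]; ring
  · intro x hx
    rw [uIoc_of_le ht.1.le] at hx
    have hx1 : x ∈ Icc (0:ℝ) 1 := ⟨hx.1.le, hx.2.trans ht.2⟩
    have hfx := hC x hx1
    have h0C : 0 ≤ C := (abs_nonneg _).trans hfx
    calc ‖x * f₁ x‖ = |x| * |f₁ x| := abs_mul _ _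
      _ ≤ t * C := by
          apply mul_le_mul _ hfx (abs_nonneg _) ht.1.le
          rw [abs_of_pos hx.1]; exact hx.2
      _ = C * t := mul_comm _ _

theorem S14f3_bound (hc : ContinuousOn f₁ (Icc 0 1)) :
    ∃ M : ℝ, 0 ≤ M ∧ ∀ t ∈ Ioc (0:ℝ) 1, |S14f3 f₁ t| ≤ M := by
  obtain ⟨C, hC⟩ := (isCompact_Icc).exists_bound_of_continuousOn hc
  have h0C : 0 ≤ C := (norm_nonneg _).trans (hC 0 ⟨le_rfl, zero_le_one⟩)
  refine ⟨2 * C, by linarith, fun t ht => ?_⟩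
  have hg := S14g_bound f₁ hc hC t ht
  have ht2 : (0:ℝ) < t ^ 2 := pow_pos ht.1 2
  calc |S14f3 f₁ t| ≤ |f₁ t| + |(1 / t ^ 2) * S14g f₁ t| := abs_sub _ _
    _ ≤ C + C := by
        apply add_le_add (hC t ⟨ht.1.le, ht.2⟩)
        rw [abs_mul, abs_of_pos (by positivity : (0:ℝ) < 1 / t ^ 2)]
        rw [div_mul_eq_mul_div, one_mul, div_le_iff₀ ht2]
        calc |S14g f₁ t| ≤ C * t ^ 2 := hg
          _ = C * t ^ 2 := rfl
    _ = 2 * C := by ring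

theorem S14f3_contOn (hc : ContinuousOn f₁ (Icc 0 1)) :
    ContinuousOn (S14f3 f₁) (Ioc 0 1) := by
  apply ContinuousOn.sub (hc.mono Ioc_subset_Icc_self)
  apply ContinuousOn.mul
  · exact (continuousOn_const.div (continuousOn_pow 2) (fun t ht => ne_of_gt (pow_pos ht.1 2)))
  · exact (S14g_cont f₁ hc).mono Ioc_subset_Icc_self


theorem S14_integrand_integrable (hc : ContinuousOn f₁ (Icc 0 1)) {σ : ℂ} (hσ : -1 < σ.re) :
    IntervalIntegrable (fun t : ℝ => (t : ℂ) ^ σ * (S14f3 f₁ t : ℂ)) volume 0 1 := by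
  obtain ⟨M, hM0, hM⟩ := S14f3_bound f₁ hc
  rw [intervalIntegrable_iff_integrableOn_Ioc_of_le zero_le_one]
  have hmeas : AEStronglyMeasurable (fun t : ℝ => (t : ℂ) ^ σ * (S14f3 f₁ t : ℂ))
      (volume.restrict (Ioc 0 1)) := by
    apply ContinuousOn.aestronglyMeasurable _ measurableSet_Ioc
    apply ContinuousOn.mul
    · intro t ht
      exact (Complex.continuousAt_ofReal_cpow_const t σ (Or.inr (ne_of_gt ht.1))).continuousWithinAt
    · exact Complex.continuous_ofReal.comp_continuousOn (S14f3_contOn f₁ hc)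
  have hg : IntegrableOn (fun t : ℝ => M * t ^ σ.re) (Ioc 0 1) := by
    have h := (intervalIntegrable_rpow' (r := σ.re) hσ :
      IntervalIntegrable (fun x : ℝ => x ^ σ.re) volume 0 1)
    exact ((intervalIntegrable_iff_integrableOn_Ioc_of_le zero_le_one).mp h).const_mul M
  apply Integrable.mono' hg hmeas
  refine (ae_restrict_iff' measurableSet_Ioc).mpr (Filter.Eventually.of_forall fun t ht => ?_)
  rw [norm_mul]
  have h1 : ‖(t:ℂ)^σ‖ = t ^ σ.re := by
    rw [Complex.norm_cpow_eq_rpow_re_of_pos ht.1]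
  rw [h1, Complex.norm_real, Real.norm_eq_abs]
  rw [mul_comm M _]
  exact mul_le_mul_of_nonneg_left (hM t ht) (Real.rpow_nonneg ht.1.le _)

theorem S14F_eq_mellin (σ : ℂ) : S14F f₁ σ = mellin (S14ff f₁) (σ + 1) := by
  rw [mellin, add_sub_cancel_right, S14F, intervalIntegral.integral_of_le zero_le_one]
  have h : ∀ t : ℝ, (t:ℂ)^σ • S14ff f₁ t
      = Set.indicator (Ioc 0 1) (fun t : ℝ => (t:ℂ)^σ * (S14f3 f₁ t : ℂ)) t := by
    intro t
    by_cases hmem : t ∈ Ioc (0:ℝ) 1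
    · simp [S14ff, Set.indicator_of_mem hmem]
    · simp [S14ff, Set.indicator_of_notMem hmem]
  simp_rw [h]
  rw [setIntegral_indicator measurableSet_Ioc,
    Set.inter_eq_self_of_subset_right Ioc_subset_Ioi_self]

theorem S14ff_integrableOn (hc : ContinuousOn f₁ (Icc 0 1)) : IntegrableOn (S14ff f₁) (Ioi 0) := by
  obtain ⟨M, hM0, hM⟩ := S14f3_bound f₁ hc
  have h : IntegrableOn (fun t : ℝ => (S14f3 f₁ t : ℂ)) (Ioc 0 1) := by
    apply Integrable.mono' (integrableOn_const measure_Ioc_lt_top.ne)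
    · exact (Complex.continuous_ofReal.comp_continuousOn
        (S14f3_contOn f₁ hc)).aestronglyMeasurable measurableSet_Ioc
    · refine (ae_restrict_iff' measurableSet_Ioc).mpr (Filter.Eventually.of_forall fun t ht => ?_)
      rw [Complex.norm_real, Real.norm_eq_abs]; exact hM t ht
  exact ((integrable_indicator_iff measurableSet_Ioc).mpr h).integrableOn

theorem S14F_diff (hc : ContinuousOn f₁ (Icc 0 1)) {σ : ℂ} (hσ : -1 < σ.re) : DifferentiableAt ℂ (S14F f₁) σ := by
  obtain ⟨M, hM0, hM⟩ := S14f3_bound f₁ hc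
  have h1 : DifferentiableAt ℂ (mellin (S14ff f₁)) (σ + 1) := by
    apply mellin_differentiableAt_of_isBigO_rpow (a := σ.re + 2) (b := 0)
    · exact (S14ff_integrableOn f₁ hc).locallyIntegrableOn
    · refine Asymptotics.isBigO_iff.mpr ⟨1, ?_⟩
      filter_upwards [Filter.eventually_gt_atTop 1] with x hx
      rw [S14ff, Set.indicator_of_notMem (fun hmem => absurd hmem.2 (not_le.mpr hx))]
      simp only [norm_zero]
      positivity
    · simp only [Complex.add_re, Complex.one_re]; linarith
    · refine Asymptotics.isBigO_iff.mpr ⟨M, Filter.Eventually.of_forall fun x => ?_⟩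
      rw [neg_zero, Real.rpow_zero, norm_one, mul_one, S14ff]
      by_cases hx : x ∈ Ioc (0:ℝ) 1
      · rw [Set.indicator_of_mem hx, Complex.norm_real, Real.norm_eq_abs]; exact hM x hx
      · rw [Set.indicator_of_notMem hx, norm_zero]; exact hM0
    · simp only [Complex.add_re, Complex.one_re]; linarith
  have heq : S14F f₁ = fun σ => mellin (S14ff f₁) (σ + 1) := funext (S14F_eq_mellin f₁)
  rw [heq]
  have h2 : DifferentiableAt ℂ (fun z : ℂ => z + 1) σ := differentiableAt_id.add_const 1
  have h3 := DifferentiableAt.comp (g := mellin (S14ff f₁)) (f := fun z : ℂ => z + 1) σ h1 h2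
  exact h3


-- derivative of the primitive S14g
theorem S14g_deriv (hc : ContinuousOn f₁ (Icc 0 1)) :
    ∀ t ∈ Ioo (0:ℝ) 1, HasDerivAt (S14g f₁) (t * f₁ t) t := by
  intro t ht
  have hcont : ContinuousOn (fun x : ℝ => x * f₁ x) (Icc 0 1) := continuousOn_id.mul hc
  have hmem : Icc (0:ℝ) 1 ∈ 𝓝 t := Icc_mem_nhds ht.1 ht.2
  have hco : ContinuousOn (fun x : ℝ => x * f₁ x) (Ioo 0 1) := hcont.mono Ioo_subset_Icc_self
  apply intervalIntegral.integral_hasDerivAt_right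
  · apply ContinuousOn.intervalIntegrable
    rw [uIcc_of_le ht.1.le]
    exact hcont.mono (Icc_subset_Icc le_rfl ht.2.le)
  · exact hco.stronglyMeasurableAtFilter isOpen_Ioo t ht
  · exact hcont.continuousAt hmem

theorem S14_deriv_package (hf₁ : ContDiffOn ℝ 2 f₁ (Set.Icc 0 1)) :
    ∃ d3 : ℝ → ℝ, ∃ M' : ℝ, 0 ≤ M' ∧
      (∀ t ∈ Ioo (0:ℝ) 1, HasDerivAt (S14f3 f₁) (d3 t) t) ∧
      (∀ t ∈ Ioc (0:ℝ) 1, |d3 t| ≤ M') ∧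
      ContinuousOn d3 (Ioo 0 1) := by
  have hc : ContinuousOn f₁ (Icc 0 1) := hf₁.continuousOn
  set d1 : ℝ → ℝ := fun t => derivWithin f₁ (Icc 0 1) t with hd1def
  have hd1c : ContinuousOn d1 (Icc 0 1) :=
    (hf₁.derivWithin (uniqueDiffOn_Icc zero_lt_one) (m := 1) (by norm_num)).continuousOn
  have hd1 : ∀ t ∈ Ioo (0:ℝ) 1, HasDerivAt f₁ (d1 t) t := by
    intro t ht
    have hmem : Icc (0:ℝ) 1 ∈ 𝓝 t := Icc_mem_nhds ht.1 ht.2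
    exact ((hf₁.differentiableOn (by norm_num) t
      (Ioo_subset_Icc_self ht)).hasDerivWithinAt).hasDerivAt hmem
  obtain ⟨C₁, hC₁⟩ := (isCompact_Icc).exists_bound_of_continuousOn hd1c
  have hC₁0 : 0 ≤ C₁ := (norm_nonneg _).trans (hC₁ 0 ⟨le_rfl, zero_le_one⟩)
  set h : ℝ → ℝ := fun t => 2 * S14g f₁ t - t ^ 2 * f₁ t with hhdef
  have hg' := S14g_deriv f₁ hc
  have hh : ∀ t ∈ Ioo (0:ℝ) 1, HasDerivAt h (-(t ^ 2 * d1 t)) t := by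
    intro t ht
    have H := ((hg' t ht).const_mul (2:ℝ)).sub ((hasDerivAt_pow 2 t).mul (hd1 t ht))
    refine H.congr_deriv ?_
    norm_num
    ring
  have hhb : ∀ t ∈ Ioc (0:ℝ) 1, |h t| ≤ C₁ * t ^ 3 := by
    intro t ht
    have hconth : ContinuousOn h (Icc 0 t) := by
      apply ContinuousOn.sub
      · exact (continuousOn_const.mul ((S14g_cont f₁ hc).mono
          (Icc_subset_Icc le_rfl ht.2)))
      · exact (continuousOn_pow 2).mul (hc.mono (Icc_subset_Icc le_rfl ht.2))
    have hint : IntervalIntegrable (fun x : ℝ => -(x ^ 2 * d1 x)) volume 0 t := by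
      apply ContinuousOn.intervalIntegrable
      rw [uIcc_of_le ht.1.le]
      exact (((continuousOn_pow 2).mul (hd1c.mono (Icc_subset_Icc le_rfl ht.2))).neg)
    have hFTC := intervalIntegral.integral_eq_sub_of_hasDeriv_right_of_le ht.1.le hconth
      (fun x hx => (hh x ⟨hx.1, lt_of_lt_of_le hx.2 ht.2⟩).hasDerivWithinAt) hint
    have h0 : h 0 = 0 := by
      simp [hhdef, S14g, intervalIntegral.integral_same]
    have hval : h t = ∫ x in (0:ℝ)..t, -(x ^ 2 * d1 x) := by
      rw [hFTC, h0, sub_zero]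
    rw [hval]
    have hb := intervalIntegral.norm_integral_le_of_norm_le_const
      (C := C₁ * t ^ 2) (f := fun x : ℝ => -(x ^ 2 * d1 x)) (a := 0) (b := t) ?_
    · calc ‖∫ x in (0:ℝ)..t, -(x ^ 2 * d1 x)‖ ≤ C₁ * t ^ 2 * |t - 0| := hb
        _ = C₁ * t ^ 3 := by rw [sub_zero, abs_of_pos ht.1]; ring
    · intro x hx
      rw [uIoc_of_le ht.1.le] at hx
      have hx1 : x ∈ Icc (0:ℝ) 1 := ⟨hx.1.le, hx.2.trans ht.2⟩
      rw [norm_neg, norm_mul]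
      have h1 : ‖x ^ 2‖ ≤ t ^ 2 := by
        rw [Real.norm_eq_abs, _root_.abs_of_nonneg (by positivity : (0:ℝ) ≤ x ^ 2)]
        exact pow_le_pow_left₀ hx.1.le hx.2 2
      calc ‖x ^ 2‖ * ‖d1 x‖ ≤ t ^ 2 * C₁ :=
            mul_le_mul h1 (hC₁ x hx1) (norm_nonneg _) (by positivity)
        _ = C₁ * t ^ 2 := mul_comm _ _
  refine ⟨fun t => d1 t + (2 * S14g f₁ t - t ^ 2 * f₁ t) / t ^ 3, 2 * C₁, by linarith,
    ?_, ?_, ?_⟩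
  · intro t ht
    have ht0 : t ≠ 0 := ne_of_gt ht.1
    have h2ne : t ^ 2 ≠ 0 := pow_ne_zero 2 ht0
    have hmul := ((hasDerivAt_pow 2 t).inv h2ne).mul (hg' t ht)
    have hder := (hd1 t ht).sub hmul
    have hfun : (fun t : ℝ => f₁ t - (t ^ 2)⁻¹ * S14g f₁ t) = S14f3 f₁ := by
      funext u
      rw [S14f3, one_div]
    rw [← hfun]
    refine hder.congr_deriv ?_
    simp only [Pi.inv_apply]
    field_simp
    ring
  · intro t ht
    have ht3 : (0:ℝ) < t ^ 3 := pow_pos ht.1 3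
    have h2 : |(2 * S14g f₁ t - t ^ 2 * f₁ t) / t ^ 3| ≤ C₁ := by
      rw [abs_div, abs_of_pos ht3, div_le_iff₀ ht3]
      exact hhb t ht
    calc |d1 t + (2 * S14g f₁ t - t ^ 2 * f₁ t) / t ^ 3|
        ≤ |d1 t| + |(2 * S14g f₁ t - t ^ 2 * f₁ t) / t ^ 3| := abs_add_le _ _
      _ ≤ C₁ + C₁ := add_le_add (hC₁ t ⟨ht.1.le, ht.2⟩) h2
      _ = 2 * C₁ := by ring
  · apply ContinuousOn.add (hd1c.mono Ioo_subset_Icc_self)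
    apply ContinuousOn.div
    · exact (continuousOn_const.mul ((S14g_cont f₁ hc).mono Ioo_subset_Icc_self)).sub
        ((continuousOn_pow 2).mul (hc.mono Ioo_subset_Icc_self))
    · exact continuousOn_pow 3
    · exact fun t ht => ne_of_gt (pow_pos ht.1 3)


theorem S14_keybound (hf₁ : ContDiffOn ℝ 2 f₁ (Set.Icc 0 1)) :
    ∃ C : ℝ, 0 < C ∧ ∀ σ : ℂ, -1 < σ.re → ‖σ + 1‖ * ‖S14F f₁ σ‖ ≤ C := by
  have hc : ContinuousOn f₁ (Icc 0 1) := hf₁.continuousOn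
  obtain ⟨M, hM0, hM⟩ := S14f3_bound f₁ hc
  obtain ⟨d3, M', hM'0, hd3, hd3b, hd3c⟩ := S14_deriv_package f₁ hf₁
  refine ⟨M + M' + 1, by linarith, fun σ hσ => ?_⟩
  have hsre : (0:ℝ) < (σ + 1).re := by simp only [Complex.add_re, Complex.one_re]; linarith
  have hs0 : σ + 1 ≠ 0 := fun hcon => by rw [hcon] at hsre; simp at hsre
  have hsnorm : (0:ℝ) < ‖σ + 1‖ := norm_pos_iff.mpr hs0
  have hσne : σ ≠ -1 := fun hcon => hs0 (by rw [hcon]; ring)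
  set G : ℝ → ℂ := fun t => (t : ℂ) ^ (σ + 1) / (σ + 1) * (S14f3 f₁ t : ℂ) with hGdef
  set A : ℝ → ℂ := fun t => (t : ℂ) ^ σ * (S14f3 f₁ t : ℂ) with hAdef
  set B : ℝ → ℂ := fun t => (t : ℂ) ^ (σ + 1) / (σ + 1) * (d3 t : ℂ) with hBdef
  have hGderiv : ∀ t ∈ Ioo (0:ℝ) 1, HasDerivAt G (A t + B t) t := by
    intro t ht
    have hcpow : HasDerivAt (fun y : ℝ => (y : ℂ) ^ (σ + 1) / (σ + 1)) ((t : ℂ) ^ σ) t :=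
      hasDerivAt_ofReal_cpow_const' (ne_of_gt ht.1) hσne
    have hf3 : HasDerivAt (fun u : ℝ => ((S14f3 f₁ u : ℝ) : ℂ)) ((d3 t : ℝ) : ℂ) t :=
      (hd3 t ht).ofReal_comp
    exact hcpow.mul hf3
  have hBnorm : ∀ t ∈ Ioc (0:ℝ) 1, ‖B t‖ ≤ M' / ‖σ + 1‖ := by
    intro t ht
    rw [hBdef]
    simp only [norm_mul, norm_div]
    have h1 : ‖(t:ℂ) ^ (σ+1)‖ ≤ 1 := by
      rw [Complex.norm_cpow_eq_rpow_re_of_pos ht.1]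
      exact Real.rpow_le_one ht.1.le ht.2 hsre.le
    have h2 : ‖((d3 t : ℝ) : ℂ)‖ ≤ M' := by
      rw [Complex.norm_real, Real.norm_eq_abs]; exact hd3b t ht
    calc ‖(t:ℂ)^(σ+1)‖ / ‖σ+1‖ * ‖((d3 t : ℝ):ℂ)‖ ≤ 1 / ‖σ+1‖ * M' := by gcongr
      _ = M' / ‖σ+1‖ := by ring
  have hG0 : G 0 = 0 := by
    simp [hGdef, Complex.zero_cpow hs0]
  have hGcont : ContinuousOn G (Icc 0 1) := by
    intro t ht
    rcases eq_or_ne t 0 with rfl | ht0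
    · have htend : Tendsto (fun u : ℝ => M / ‖σ+1‖ * u ^ ((σ+1).re))
          (𝓝[Icc (0:ℝ) 1] (0:ℝ)) (𝓝 0) := by
        have hrc : ContinuousAt (fun u : ℝ => u ^ ((σ+1).re)) 0 :=
          Real.continuousAt_rpow_const 0 _ (Or.inr hsre.le)
        have h := hrc.tendsto.const_mul (M / ‖σ+1‖)
        rw [Real.zero_rpow (ne_of_gt hsre), mul_zero] at h
        exact h.mono_left nhdsWithin_le_nhds
      have hsq : Tendsto G (𝓝[Icc (0:ℝ) 1] (0:ℝ)) (𝓝 0) := by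
        apply squeeze_zero_norm' _ htend
        filter_upwards [self_mem_nhdsWithin] with u hu
        rcases eq_or_ne u 0 with rfl | hu0
        · rw [hG0, norm_zero, Real.zero_rpow (ne_of_gt hsre), mul_zero]
        · have hupos : 0 < u := lt_of_le_of_ne hu.1 (Ne.symm hu0)
          have heq : ‖G u‖ = u ^ ((σ+1).re) / ‖σ+1‖ * |S14f3 f₁ u| := by
            rw [hGdef]
            simp only [norm_mul, norm_div]
            rw [Complex.norm_cpow_eq_rpow_re_of_pos hupos,
              Complex.norm_real, Real.norm_eq_abs]
          rw [heq]
          calc u^((σ+1).re)/‖σ+1‖ * |S14f3 f₁ u| ≤ u^((σ+1).re)/‖σ+1‖ * M := by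
                gcongr
                exact hM u ⟨hupos, hu.2⟩
            _ = M/‖σ+1‖ * u^((σ+1).re) := by ring
      show Tendsto G _ (𝓝 (G 0))
      rw [hG0]; exact hsq
    · have htpos : 0 < t := lt_of_le_of_ne ht.1 (Ne.symm ht0)
      have h1 : ContinuousWithinAt (fun u : ℝ => (u:ℂ)^(σ+1)/(σ+1)) (Icc 0 1) t :=
        ((Complex.continuousAt_ofReal_cpow_const t (σ+1)
          (Or.inr ht0)).div_const _).continuousWithinAt
      have hmem : Ioc (0:ℝ) 1 ∈ 𝓝[Icc (0:ℝ) 1] t := by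
        rw [mem_nhdsWithin]
        exact ⟨Ioi 0, isOpen_Ioi, htpos, fun x hx => ⟨hx.1, hx.2.2⟩⟩
      have h2 : ContinuousWithinAt (fun u : ℝ => ((S14f3 f₁ u : ℝ):ℂ)) (Icc 0 1) t :=
        ((Complex.continuous_ofReal.comp_continuousOn (S14f3_contOn f₁ hc)) t
          ⟨htpos, ht.2⟩).mono_of_mem_nhdsWithin hmem
      exact h1.mul h2
  have hAint : IntervalIntegrable A volume 0 1 := S14_integrand_integrable f₁ hc hσ
  have hBint : IntervalIntegrable B volume 0 1 := by
    rw [intervalIntegrable_iff_integrableOn_Ioo_of_le zero_le_one]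
    have hmeas : AEStronglyMeasurable B (volume.restrict (Ioo 0 1)) := by
      apply ContinuousOn.aestronglyMeasurable _ measurableSet_Ioo
      apply ContinuousOn.mul
      · intro t ht
        exact ((Complex.continuousAt_ofReal_cpow_const t (σ+1)
          (Or.inr (ne_of_gt ht.1))).div_const _).continuousWithinAt
      · exact Complex.continuous_ofReal.comp_continuousOn hd3c
    apply Integrable.mono' (integrableOn_const (C := M' / ‖σ + 1‖) measure_Ioo_lt_top.ne) hmeas
    refine (ae_restrict_iff' measurableSet_Ioo).mpr (Filter.Eventually.of_forall fun t ht => ?_)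
    exact hBnorm t ⟨ht.1, ht.2.le⟩
  have hFTC : ∫ t in (0:ℝ)..1, (A t + B t) = G 1 - G 0 :=
    intervalIntegral.integral_eq_sub_of_hasDeriv_right_of_le zero_le_one hGcont
      (fun t ht => (hGderiv t ht).hasDerivWithinAt) (hAint.add hBint)
  have hG1 : G 1 = (S14f3 f₁ 1 : ℂ) / (σ + 1) := by
    simp only [hGdef, Complex.ofReal_one, Complex.one_cpow]
    ring
  have hSF : S14F f₁ σ = ∫ t in (0:ℝ)..1, A t := rfl
  have hsplit : (∫ t in (0:ℝ)..1, (A t + B t))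
      = S14F f₁ σ + ∫ t in (0:ℝ)..1, B t := by
    rw [hSF]; exact intervalIntegral.integral_add hAint hBint
  have hJ : ‖∫ t in (0:ℝ)..1, B t‖ ≤ M' / ‖σ+1‖ := by
    have hb := intervalIntegral.norm_integral_le_of_norm_le_const
      (C := M'/‖σ+1‖) (f := B) (a := 0) (b := 1) ?_
    · simpa using hb
    · intro x hx
      rw [uIoc_of_le zero_le_one] at hx
      exact hBnorm x hx
  have hFeq : S14F f₁ σ = (S14f3 f₁ 1 : ℂ)/(σ+1) - ∫ t in (0:ℝ)..1, B t := by
    have h := hFTC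
    rw [hsplit, hG1, hG0, sub_zero] at h
    exact eq_sub_of_add_eq h
  calc ‖σ+1‖ * ‖S14F f₁ σ‖ = ‖(σ+1) * S14F f₁ σ‖ := (norm_mul _ _).symm
    _ = ‖((S14f3 f₁ 1 : ℝ) : ℂ) - (σ+1) * ∫ t in (0:ℝ)..1, B t‖ := by
        rw [hFeq, mul_sub]
        congr 2
        field_simp
    _ ≤ ‖((S14f3 f₁ 1:ℝ):ℂ)‖ + ‖(σ+1) * ∫ t in (0:ℝ)..1, B t‖ := norm_sub_le _ _
    _ ≤ M + M' := by
        apply add_le_add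
        · rw [Complex.norm_real, Real.norm_eq_abs]; exact hM 1 ⟨zero_lt_one, le_rfl⟩
        · rw [norm_mul]
          calc ‖σ+1‖ * ‖∫ t in (0:ℝ)..1, B t‖ ≤ ‖σ+1‖ * (M'/‖σ+1‖) := by gcongr
            _ = M' := mul_div_cancel₀ M' (ne_of_gt hsnorm)
    _ ≤ M + M' + 1 := by linarith


theorem stmt14_aux (hf₁ : ContDiffOn ℝ 2 f₁ (Set.Icc 0 1))
    (hne : ({σ : ℂ | -1 < σ.re ∧ σ ≠ 0 ∧ S14F f₁ σ = 1}).Nonempty) :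
    ∃ σ₁ ∈ {σ : ℂ | -1 < σ.re ∧ σ ≠ 0 ∧ S14F f₁ σ = 1},
      ∀ σ ∈ {σ : ℂ | -1 < σ.re ∧ σ ≠ 0 ∧ S14F f₁ σ = 1}, σ.re ≤ σ₁.re := by
  have hc : ContinuousOn f₁ (Icc 0 1) := hf₁.continuousOn
  obtain ⟨σ₀, hσ₀⟩ := hne
  obtain ⟨hσ₀re, hσ₀0, hσ₀F⟩ := hσ₀
  obtain ⟨C, hC0, hC⟩ := S14_keybound f₁ hf₁
  set U : Set ℂ := {z : ℂ | -1 < z.re} with hUdef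
  have hUopen : IsOpen U := by
    have : U = Complex.re ⁻¹' Ioi (-1) := rfl
    rw [this]; exact Complex.continuous_re.isOpen_preimage _ isOpen_Ioi
  have hUconn : IsPreconnected U := (convex_halfSpace_re_gt (-1)).isPreconnected
  have hdiff : DifferentiableOn ℂ (S14F f₁) U := fun z hz =>
    (S14F_diff f₁ hc (hz : -1 < z.re)).differentiableWithinAt
  have hana : AnalyticOnNhd ℂ (S14F f₁) U := hdiff.analyticOnNhd hUopen
  have hnotall : ¬ (∀ z ∈ U, S14F f₁ z = 1) := by
    intro hall
    have hCU : (C:ℂ) ∈ U := by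
      simp only [hUdef, mem_setOf_eq, Complex.ofReal_re]; linarith
    have h1 := hC (C:ℂ) hCU
    rw [hall _ hCU, norm_one, mul_one] at h1
    have h2 : ‖(C:ℂ)+1‖ = C+1 := by
      rw [← Complex.ofReal_one, ← Complex.ofReal_add, Complex.norm_real,
        Real.norm_eq_abs, _root_.abs_of_pos (by linarith)]
    linarith [h2 ▸ h1]
  have h0U : (0:ℂ) ∈ U := by simp [hUdef]
  rcases (hana 0 h0U).eventually_eq_or_eventually_ne analyticAt_const with heq | hne0
  · exact absurd (fun z hz =>
      (hana.eqOn_of_preconnected_of_eventuallyEq analyticOnNhd_const hUconn h0U heq) hz)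
      hnotall
  · rw [eventually_nhdsWithin_iff] at hne0
    obtain ⟨ε, hε0, hεball⟩ := Metric.eventually_nhds_iff.mp hne0
    -- the compact set
    set K : Set ℂ := {z : ℂ | σ₀.re ≤ z.re ∧ ‖z + 1‖ ≤ C ∧ ε ≤ ‖z‖ ∧ S14F f₁ z = 1} with hKdef
    have hSK : ∀ σ : ℂ, -1 < σ.re → σ ≠ 0 → S14F f₁ σ = 1 → σ₀.re ≤ σ.re → σ ∈ K := by
      intro σ hre h0 hF hge
      refine ⟨hge, ?_, ?_, hF⟩
      · have := hC σ hre
        rw [hF, norm_one, mul_one] at this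
        exact this
      · by_contra hlt
        push_neg at hlt
        exact hεball (by rwa [dist_zero_right]) (by simpa using h0) hF
    have hK0 : σ₀ ∈ K := hSK σ₀ hσ₀re hσ₀0 hσ₀F le_rfl
    have hKP : ∀ z ∈ K, -1 < z.re ∧ z ≠ 0 ∧ S14F f₁ z = 1 := by
      intro z hz
      refine ⟨lt_of_lt_of_le hσ₀re hz.1, ?_, hz.2.2.2⟩
      intro h0
      rw [h0] at hz
      have h3 : ε ≤ ‖(0:ℂ)‖ := hz.2.2.1
      rw [norm_zero] at h3
      exact absurd h3 (not_le.mpr hε0)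
    have hKclosed : IsClosed K := by
      apply IsSeqClosed.isClosed
      intro xs x hxs hlim
      have h1 : σ₀.re ≤ x.re :=
        le_of_tendsto_of_tendsto tendsto_const_nhds
          ((Complex.continuous_re.tendsto x).comp hlim)
          (Filter.Eventually.of_forall fun n => (hxs n).1)
      have h2 : ‖x + 1‖ ≤ C :=
        le_of_tendsto (((continuous_add_right (1:ℂ)).tendsto x).norm.comp hlim)
          (Filter.Eventually.of_forall fun n => (hxs n).2.1)
      have h3 : ε ≤ ‖x‖ :=
        le_of_tendsto_of_tendsto tendsto_const_nhds ((continuous_norm.tendsto x).comp hlim)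
          (Filter.Eventually.of_forall fun n => (hxs n).2.2.1)
      have hxre : -1 < x.re := lt_of_lt_of_le hσ₀re h1
      have h4 : S14F f₁ x = 1 := by
        have hcont := (S14F_diff f₁ hc hxre).continuousAt
        have := hcont.tendsto.comp hlim
        have heq : (fun n => S14F f₁ (xs n)) = fun _ => (1:ℂ) :=
          funext fun n => (hxs n).2.2.2
        rw [Function.comp_def, heq] at this
        exact (tendsto_nhds_unique tendsto_const_nhds this).symm
      exact ⟨h1, h2, h3, h4⟩
    have hKbounded : Bornology.IsBounded K := by
      apply (Metric.isBounded_closedBall (x := (-1:ℂ)) (r := C)).subset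
      intro z hz
      rw [Metric.mem_closedBall, dist_eq_norm]
      calc ‖z - (-1)‖ = ‖z + 1‖ := by rw [sub_neg_eq_add]
        _ ≤ C := hz.2.1
    have hKcompact : IsCompact K := Metric.isCompact_of_isClosed_isBounded hKclosed hKbounded
    obtain ⟨σ₁, hσ₁K, hσ₁max⟩ :=
      hKcompact.exists_isMaxOn ⟨σ₀, hK0⟩ Complex.continuous_re.continuousOn
    refine ⟨σ₁, hKP σ₁ hσ₁K, fun σ hσ => ?_⟩
    obtain ⟨hre, h0, hF⟩ := hσ
    by_cases hge : σ₀.re ≤ σ.re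
    · exact hσ₁max (hSK σ hre h0 hF hge)
    · push_neg at hge
      exact le_trans hge.le (hσ₁max hK0)


end Stmt14Aux

theorem stmt14 (f₁ : ℝ → ℝ) (hf₁ : ContDiffOn ℝ 2 f₁ (Set.Icc 0 1)) :
    ({σ : ℂ | -1 < σ.re ∧ σ ≠ 0 ∧
        (∫ t in (0:ℝ)..1,
            (t : ℂ) ^ σ * ((f₁ t - (1 / t ^ 2) * ∫ x in (0:ℝ)..t, x * f₁ x : ℝ) : ℂ)) = 1}).Nonempty →
    ∃ σ₁ ∈ {σ : ℂ | -1 < σ.re ∧ σ ≠ 0 ∧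
        (∫ t in (0:ℝ)..1,
            (t : ℂ) ^ σ * ((f₁ t - (1 / t ^ 2) * ∫ x in (0:ℝ)..t, x * f₁ x : ℝ) : ℂ)) = 1},
      ∀ σ ∈ {σ : ℂ | -1 < σ.re ∧ σ ≠ 0 ∧
        (∫ t in (0:ℝ)..1,
            (t : ℂ) ^ σ * ((f₁ t - (1 / t ^ 2) * ∫ x in (0:ℝ)..t, x * f₁ x : ℝ) : ℂ)) = 1},
        σ.re ≤ σ₁.re := by
  intro hne
  exact stmt14_aux f₁ hf₁ hne
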